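/- If the pair ([C̄', (L⊗H)']', I_N ⊗ A) is detectable and 1_N ∈ Ker L, then rank O_H ≥ max_i dim C_i^u, where O_H is the observability matrix of (H,A). -/

import Mathlib

open Matrix Kronecker Polynomial

lemma mulVec_pow_zero {n mi : ℕ} (A : Matrix (Fin n) (Fin n) ℝ)
    (M : Matrix (Fin mi) (Fin n) ℝ) (x : Fin n → ℝ)
    (h : ∀ l : Fin n, (M * A ^ (l : ℕ)).mulVec x = 0) (k : ℕ) :
    (M * A ^ k).mulVec x = 0 := by
  rcases Nat.eq_zero_or_pos n with hn | hn
  · subst hn; ext j; simp [Matrix.mulVec, dotProduct]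
  · set r := (X ^ k : ℝ[X]) %ₘ A.charpoly with hr
    have hch : A.charpoly.Monic := A.charpoly_monic
    have hdeg : r.natDegree < n := by
      have h1 : A.charpoly ≠ 1 := by
        intro h1
        have h2 := A.charpoly_natDegree_eq_dim
        rw [h1] at h2; simp [Fintype.card_fin] at h2; omega
      have := Polynomial.natDegree_modByMonic_lt (X ^ k : ℝ[X]) hch h1
      rwa [A.charpoly_natDegree_eq_dim, Fintype.card_fin] at this
    have hsum : A ^ k = ∑ j ∈ Finset.range n, r.coeff j • A ^ j := by
      rw [A.pow_eq_aeval_mod_charpoly k, ← hr, Polynomial.aeval_eq_sum_range' hdeg]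
    rw [hsum, Matrix.mul_sum]
    ext j0
    simp only [Matrix.mulVec, dotProduct, Matrix.sum_apply, mul_smul_comm,
      Matrix.smul_apply, smul_eq_mul, Finset.sum_mul, Pi.zero_apply]
    rw [Finset.sum_comm]
    refine Finset.sum_eq_zero fun j hj => ?_
    have h0 := congrFun (h ⟨j, Finset.mem_range.mp hj⟩) j0
    simp only [Matrix.mulVec, dotProduct, Pi.zero_apply] at h0
    have hent : ∀ c, (M * r.coeff j • A ^ j) j0 c * x c
        = r.coeff j * ((M * A ^ j) j0 c * x c) := by
      intro c; rw [Matrix.mul_smul]; simp [mul_assoc]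
    simp only [hent]
    rw [← Finset.mul_sum, h0, mul_zero]

lemma one_kron_pow {n N : ℕ} (A : Matrix (Fin n) (Fin n) ℝ) (l : ℕ) :
    ((1 : Matrix (Fin N) (Fin N) ℝ) ⊗ₖ A) ^ l = (1 : Matrix (Fin N) (Fin N) ℝ) ⊗ₖ (A ^ l) := by
  induction l with
  | zero => simp [Matrix.one_kronecker_one]
  | succ l ih => rw [pow_succ, ih, pow_succ, ← Matrix.mul_kronecker_mul, Matrix.one_mul]

lemma aeval_one_kron {n N : ℕ} (A : Matrix (Fin n) (Fin n) ℝ) (p : ℝ[X]) :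
    aeval ((1 : Matrix (Fin N) (Fin N) ℝ) ⊗ₖ A) p
      = (1 : Matrix (Fin N) (Fin N) ℝ) ⊗ₖ (aeval A p) := by
  induction p using Polynomial.induction_on' with
  | add p q hp hq => rw [map_add, hp, hq, map_add, Matrix.kronecker_add]
  | monomial k a =>
      rw [aeval_monomial, aeval_monomial, one_kron_pow,
        Algebra.algebraMap_eq_smul_one, Algebra.algebraMap_eq_smul_one,
        smul_mul_assoc, smul_mul_assoc, one_mul, one_mul, Matrix.kronecker_smul]

/-- Block diagonal matrix `C̄ = diag[C_1, …, C_N]`. -/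
def Cbar {N n : ℕ} (m : Fin N → ℕ) (C : ∀ i, Matrix (Fin (m i)) (Fin n) ℝ) :
    Matrix ((i : Fin N) × Fin (m i)) (Fin N × Fin n) ℝ :=
  Matrix.of fun p q => if p.1 = q.1 then C p.1 p.2 q.2 else 0

/-- The observability matrix `O_H = [H' (HA)' … (HA^{n-1})']'`. -/
def obsMat {n mH : ℕ} (A : Matrix (Fin n) (Fin n) ℝ) (H : Matrix (Fin mH) (Fin n) ℝ) :
    Matrix (Fin n × Fin mH) (Fin n) ℝ :=
  Matrix.of fun p c => (H * A ^ (p.1 : ℕ)) p.2 c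

/-- The undetectable subspace of `(C_i, A)`:
`⋂_{l=1}^n Ker(C_i A^{l-1}) ∩ Ker α⁺_A(A)`. -/
noncomputable def undetSub {n mi : ℕ} (A : Matrix (Fin n) (Fin n) ℝ)
    (Ci : Matrix (Fin mi) (Fin n) ℝ) (aplus : Polynomial ℝ) :
    Submodule ℝ (Fin n → ℝ) :=
  (⨅ l : Fin n, LinearMap.ker ((Ci * A ^ (l : ℕ)).mulVecLin)) ⊓
    LinearMap.ker (aeval A aplus).mulVecLin

/-- Theorem 1(iii): if the pair `([C̄', (L⊗H)']', I_N ⊗ A)` is detectable and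
`1_N ∈ Ker L`, then `rank O_H ≥ max_i dim C_iᵘ`. -/
theorem rank_obsMat_ge_dim_undet {n N mH : ℕ} (hN : 0 < N)
    (A : Matrix (Fin n) (Fin n) ℝ)
    (m : Fin N → ℕ) (C : ∀ i, Matrix (Fin (m i)) (Fin n) ℝ)
    (H : Matrix (Fin mH) (Fin n) ℝ) (L : Matrix (Fin N) (Fin N) ℝ)
    (aminus aplus : Polynomial ℝ)
    (hmonicm : aminus.Monic) (hmonicp : aplus.Monic)
    (hfact : minpoly ℝ A = aminus * aplus)
    (hminus : ∀ μ ∈ (aminus.map (algebraMap ℝ ℂ)).roots, μ.re < 0)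
    (hplus : ∀ μ ∈ (aplus.map (algebraMap ℝ ℂ)).roots, 0 ≤ μ.re)
    (hone : L.mulVec (fun _ => 1) = 0)
    (hdet : ∀ x : Fin N × Fin n → ℝ,
      (∀ l < n * N,
          (Cbar m C * ((1 : Matrix (Fin N) (Fin N) ℝ) ⊗ₖ A) ^ l).mulVec x = 0 ∧
          ((L ⊗ₖ H) * ((1 : Matrix (Fin N) (Fin N) ℝ) ⊗ₖ A) ^ l).mulVec x = 0) →
      (aeval ((1 : Matrix (Fin N) (Fin N) ℝ) ⊗ₖ A) aplus).mulVec x = 0 →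
      x = 0) :
    ∀ i : Fin N, Module.finrank ℝ (undetSub A (C i) aplus) ≤ (obsMat A H).rank := by
  intro i
  classical
  set K := LinearMap.ker (obsMat A H).mulVecLin with hKdef
  have hinf : undetSub A (C i) aplus ⊓ K = ⊥ := by
    rw [Submodule.eq_bot_iff]
    intro x hx
    simp only [undetSub, hKdef, Submodule.mem_inf, Submodule.mem_iInf,
      LinearMap.mem_ker, Matrix.mulVecLin_apply] at hx
    obtain ⟨⟨hC0, hp0⟩, hKx⟩ := hx
    have hCall : ∀ l : ℕ, (C i * A ^ l).mulVec x = 0 := mulVec_pow_zero A (C i) x hC0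
    have hHall : ∀ l : ℕ, (H * A ^ l).mulVec x = 0 := by
      apply mulVec_pow_zero A H x
      intro l'
      ext j
      have := congrFun hKx (l', j)
      simpa [obsMat, Matrix.mulVec, dotProduct] using this
    set X : Fin N × Fin n → ℝ := fun p => if p.1 = i then x p.2 else 0 with hXdef
    have hXmul : ∀ B : Matrix (Fin n) (Fin n) ℝ,
        ((1 : Matrix (Fin N) (Fin N) ℝ) ⊗ₖ B).mulVec X
          = fun p => if p.1 = i then B.mulVec x p.2 else 0 := by
      intro B
      funext p
      simp only [Matrix.mulVec, dotProduct, Fintype.sum_prod_type,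
        Matrix.kroneckerMap_apply, Matrix.one_apply, hXdef, ite_mul, one_mul, zero_mul,
        mul_ite, mul_zero, Finset.sum_ite_irrel, Finset.sum_const_zero,
        Fintype.sum_ite_eq']
    have hX : X = 0 := by
      apply hdet
      · intro l _
        constructor
        · rw [one_kron_pow, ← Matrix.mulVec_mulVec, hXmul]
          ext q
          obtain ⟨j, r⟩ := q
          simp only [Cbar, Matrix.mulVec, dotProduct, Fintype.sum_prod_type, Matrix.of_apply,
            ite_mul, zero_mul, mul_ite, mul_zero, Pi.zero_apply,
            Finset.sum_ite_irrel, Finset.sum_const_zero, Fintype.sum_ite_eq']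
          by_cases hq : j = i
          · subst hq
            simp only [if_pos rfl]
            have he : (∑ c, C j r c * ∑ c', (A ^ l) c c' * x c')
                = ((C j) *ᵥ ((A ^ l) *ᵥ x)) r := rfl
            rw [he, Matrix.mulVec_mulVec, hCall l]
            rfl
          · simp [hq]
        · rw [one_kron_pow, ← Matrix.mulVec_mulVec, hXmul]
          ext q
          simp only [Matrix.mulVec, dotProduct, Fintype.sum_prod_type,
            Matrix.kroneckerMap_apply, mul_ite, mul_zero, Pi.zero_apply,
            Finset.sum_ite_irrel, Finset.sum_const_zero, Fintype.sum_ite_eq']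
          simp only [mul_assoc, ← Finset.mul_sum]
          have he : (∑ c, H q.2 c * ∑ c', (A ^ l) c c' * x c')
              = (H *ᵥ ((A ^ l) *ᵥ x)) q.2 := rfl
          rw [he, Matrix.mulVec_mulVec, hHall l]
          simp
      · rw [aeval_one_kron, hXmul]
        funext p
        simp [hp0]
    funext c
    have := congrFun hX (i, c)
    simpa [hXdef] using this
  have h1 := Submodule.finrank_sup_add_finrank_inf_eq (undetSub A (C i) aplus) K
  rw [hinf, finrank_bot, add_zero] at h1
  have h2 : Module.finrank ℝ ↥(undetSub A (C i) aplus ⊔ K) ≤ n := by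
    have h := Submodule.finrank_le (undetSub A (C i) aplus ⊔ K)
    rwa [Module.finrank_fin_fun] at h
  have h3 := LinearMap.finrank_range_add_finrank_ker (obsMat A H).mulVecLin
  rw [Module.finrank_fin_fun] at h3
  have h4 : (obsMat A H).rank = Module.finrank ℝ (LinearMap.range (obsMat A H).mulVecLin) := rfl
  have h5 : Module.finrank ℝ ↥K
      = Module.finrank ℝ ↥(LinearMap.ker (obsMat A H).mulVecLin) := rfl
  rw [h4]
  omega
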